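/- Let λ > 0, σ > 0, ρ > 0 and m > 0. Set μ = 1 + 2λ/σ and κ = (μ−1)·m/ρ, and define f : (0,∞) → ℝ by f(w) = ρ · (κ^μ/Γ(μ)) · e^{−κ/w} · w^{−(1+μ)}. Then f satisfies the stationary Fokker–Planck equation: for every w > 0, λ · d/dw[ (w − m/ρ) · f(w) ] + (σ/2) · d²/dw²[ w² · f(w) ] = 0, where all derivatives exist in the classical sense. -/

import Mathlib

open Filter

private lemma phi_hasDerivAt (κ c : ℝ) {w : ℝ} (hw : 0 < w) :
    HasDerivAt (fun u : ℝ => Real.exp (-κ / u) * u ^ c)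
      (Real.exp (-κ / w) * (κ * w ^ (c - 2) + c * w ^ (c - 1))) w := by
  have h1 : HasDerivAt (fun u : ℝ => -κ / u) (κ / w ^ 2) w := by
    have h := (hasDerivAt_inv hw.ne').const_mul (-κ)
    have heq : (fun u : ℝ => -κ * u⁻¹) = fun u : ℝ => -κ / u := by
      funext u; rw [div_eq_mul_inv]
    rw [heq] at h
    refine h.congr_deriv ?_
    ring
  have hexp := h1.exp
  have hpow := Real.hasDerivAt_rpow_const (p := c) (Or.inl hw.ne')
  have h2 := hexp.mul hpow
  refine h2.congr_deriv ?_
  have e1 : w ^ (c - 2) = w ^ c / w ^ 2 := by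
    rw [Real.rpow_sub hw, show (2:ℝ) = ((2:ℕ):ℝ) by norm_num, Real.rpow_natCast]
  rw [e1]; field_simp

/-- **The inverse Gamma density is a stationary solution of the wealth Fokker–Planck
equation.** With `μ = 1 + 2λ/σ` and `κ = (μ-1)m/ρ`, the function
`f(w) = ρ (κ^μ/Γ(μ)) e^{-κ/w} w^{-(1+μ)}` satisfies, for every `w > 0`,
`λ d/dw[(w - m/ρ) f(w)] + (σ/2) d²/dw²[w² f(w)] = 0`,
all derivatives existing in the classical sense. -/
theorem inverseGamma_stationary_FokkerPlanck (lam σ ρ m : ℝ)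
    (hlam : 0 < lam) (hσ : 0 < σ) (hρ : 0 < ρ) (hm : 0 < m)
    (μ κ : ℝ) (hμdef : μ = 1 + 2 * lam / σ) (hκdef : κ = (μ - 1) * m / ρ)
    (f : ℝ → ℝ)
    (hfdef : ∀ w > (0:ℝ),
      f w = ρ * (κ ^ μ / Real.Gamma μ) * Real.exp (-κ / w) * w ^ (-(1 + μ))) :
    ∀ w > (0:ℝ),
      DifferentiableAt ℝ (fun u => (u - m / ρ) * f u) w ∧
      DifferentiableAt ℝ (fun u => u ^ 2 * f u) w ∧
      DifferentiableAt ℝ (deriv fun u => u ^ 2 * f u) w ∧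
      lam * deriv (fun u => (u - m / ρ) * f u) w
        + σ / 2 * deriv (deriv fun u => u ^ 2 * f u) w = 0 := by
  intro w hw
  set c : ℝ := -(1 + μ) with hc
  set A : ℝ := ρ * (κ ^ μ / Real.Gamma μ) with hA
  -- eventual equality of f with the explicit expression, near any positive point
  have hfev : ∀ x : ℝ, 0 < x →
      f =ᶠ[nhds x] fun u => A * (Real.exp (-κ / u) * u ^ c) := by
    intro x hx
    filter_upwards [isOpen_Ioi.mem_nhds hx] with u hu
    rw [hfdef u hu, hA, hc]; ring
  -- the second-order function u^2 * f u, near any positive point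
  have hev2 : ∀ x : ℝ, 0 < x →
      (fun u => u ^ 2 * f u) =ᶠ[nhds x]
        fun u => A * (Real.exp (-κ / u) * u ^ (c + 2)) := by
    intro x hx
    filter_upwards [isOpen_Ioi.mem_nhds hx] with u hu
    have hu' : (0:ℝ) < u := hu
    rw [hfdef u hu, hA, hc, Real.rpow_add hu',
      show (2:ℝ) = ((2:ℕ):ℝ) by norm_num, Real.rpow_natCast]
    ring
  -- first order term
  have hF : HasDerivAt (fun u : ℝ => A * (Real.exp (-κ / u) * u ^ c))
      (A * (Real.exp (-κ / w) * (κ * w ^ (c - 2) + c * w ^ (c - 1)))) w :=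
    (phi_hasDerivAt κ c hw).const_mul A
  have hG1 : HasDerivAt
      (fun u : ℝ => (u - m / ρ) * (A * (Real.exp (-κ / u) * u ^ c)))
      (1 * (A * (Real.exp (-κ / w) * w ^ c)) +
        (w - m / ρ) * (A * (Real.exp (-κ / w) * (κ * w ^ (c - 2) + c * w ^ (c - 1))))) w :=
    ((hasDerivAt_id w).sub_const (m / ρ)).mul hF
  have hev1 : (fun u => (u - m / ρ) * f u) =ᶠ[nhds w]
      fun u => (u - m / ρ) * (A * (Real.exp (-κ / u) * u ^ c)) := by
    filter_upwards [hfev w hw] with u hu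
    rw [hu]
  have hd1 : DifferentiableAt ℝ (fun u => (u - m / ρ) * f u) w :=
    hG1.differentiableAt.congr_of_eventuallyEq hev1
  -- second order function and its derivative
  have hG2 : HasDerivAt (fun u : ℝ => A * (Real.exp (-κ / u) * u ^ (c + 2)))
      (A * (Real.exp (-κ / w) * (κ * w ^ (c + 2 - 2) + (c + 2) * w ^ (c + 2 - 1)))) w :=
    (phi_hasDerivAt κ (c + 2) hw).const_mul A
  have hd2 : DifferentiableAt ℝ (fun u => u ^ 2 * f u) w :=
    hG2.differentiableAt.congr_of_eventuallyEq (hev2 w hw)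
  -- the explicit form of deriv (u^2 f)
  have hderivG2 : ∀ x : ℝ, 0 < x →
      deriv (fun u => u ^ 2 * f u) x =
        A * (κ * (Real.exp (-κ / x) * x ^ c) + (c + 2) * (Real.exp (-κ / x) * x ^ (c + 1))) := by
    intro x hx
    rw [(hev2 x hx).deriv_eq, ((phi_hasDerivAt κ (c + 2) hx).const_mul A).deriv,
      show c + 2 - 2 = c by ring, show c + 2 - 1 = c + 1 by ring]
    ring
  have hevH : (deriv fun u => u ^ 2 * f u) =ᶠ[nhds w]
      fun x => A * (κ * (Real.exp (-κ / x) * x ^ c) + (c + 2) * (Real.exp (-κ / x) * x ^ (c + 1))) := by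
    filter_upwards [isOpen_Ioi.mem_nhds hw] with x hx
    exact hderivG2 x hx
  have hH : HasDerivAt
      (fun x : ℝ => A * (κ * (Real.exp (-κ / x) * x ^ c) + (c + 2) * (Real.exp (-κ / x) * x ^ (c + 1))))
      (A * (κ * (Real.exp (-κ / w) * (κ * w ^ (c - 2) + c * w ^ (c - 1))) +
        (c + 2) * (Real.exp (-κ / w) * (κ * w ^ (c + 1 - 2) + (c + 1) * w ^ (c + 1 - 1))))) w :=
    (((phi_hasDerivAt κ c hw).const_mul κ).add
      ((phi_hasDerivAt κ (c + 1) hw).const_mul (c + 2))).const_mul A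
  have hd3 : DifferentiableAt ℝ (deriv fun u => u ^ 2 * f u) w :=
    hH.differentiableAt.congr_of_eventuallyEq hevH
  refine ⟨hd1, hd2, hd3, ?_⟩
  rw [hev1.deriv_eq, hG1.deriv, hevH.deriv_eq, hH.deriv]
  -- rewrite all real powers in terms of t := w ^ (c - 2)
  have e1 : w ^ (c - 1) = w ^ (c - 2) * w := by
    rw [show c - 1 = c - 2 + 1 by ring, Real.rpow_add hw, Real.rpow_one]
  have e0 : w ^ c = w ^ (c - 2) * w ^ 2 := by
    rw [← Real.rpow_natCast w 2, ← Real.rpow_add hw]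
    norm_num
  have e2 : w ^ (c + 1 - 2) = w ^ (c - 2) * w := by rw [show c + 1 - 2 = c - 1 by ring]; exact e1
  have e3 : w ^ (c + 1 - 1) = w ^ (c - 2) * w ^ 2 := by rw [show c + 1 - 1 = c by ring]; exact e0
  rw [e0, e1, e2, e3]
  have hμ1 : μ - 1 ≠ 0 := by
    have h2 : 0 < 2 * lam / σ := by positivity
    rw [hμdef]; intro h; linarith
  have hlam' : lam = σ * (μ - 1) / 2 := by
    rw [hμdef]; field_simp; ring
  have hmρ : m / ρ = κ / (μ - 1) := by
    rw [hκdef]; field_simp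
  rw [hlam', hmρ, hc]
  field_simp
  ring
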